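/- Fix an integer q ≥ 1. For integers q ≤ K and 2K ≤ P, define ρ_u = C(K,u)·C(P−K,K−u)/C(P,K) for q ≤ u ≤ K, p_q = Σ_{u=q}^{K} ρ_u, and for a nonnegative integer τ define p_compromised(τ) = Σ_{u=q}^{K} (C(τ,u)/C(P,u))·(ρ_u/p_q). Let K_n, P_n, m_n be sequences of positive integers with q ≤ K_n, 2 K_n ≤ P_n, P_n/K_n = Ω(n), and m_n = o(n). Then lim_{n→∞} p_compromised(m_n K_n) = 0, where p_compromised is formed with parameters (q, K_n, P_n). (That is, the q-composite scheme is unassailable: an adversary capturing any set of m_n = o(n) sensors, and thereby compromising at most m_n K_n keys, compromises only an o(1) fraction of links among non-captured nodes.) -/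

import Mathlib

open Filter

noncomputable section

/-- `ρ_u`: the probability that two independent uniformly random `K`-subsets of
a `P`-element key pool share exactly `u` keys. -/
def rho (K P u : ℕ) : ℝ :=
  ((K.choose u : ℝ) * ((P - K).choose (K - u) : ℝ)) / (P.choose K : ℝ)

/-- `p_q`: the key-setup probability that two independent key rings share at
least `q` keys. -/
def pSetup (q K P : ℕ) : ℝ := ∑ u ∈ Finset.Icc q K, rho K P u

/-- `p_compromised(τ)`: the probability that the secure link between two
non-captured sensors is compromised, given that the adversary holds `τ` keys. -/
def pCompromised (q K P τ : ℕ) : ℝ :=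
  ∑ u ∈ Finset.Icc q K, ((τ.choose u : ℝ) / (P.choose u : ℝ)) * (rho K P u / pSetup q K P)

lemma rho_nonneg (K P u : ℕ) : 0 ≤ rho K P u := by
  unfold rho; positivity

lemma pSetup_pos {q K P : ℕ} (hqK : q ≤ K) (hKP : K ≤ P) : 0 < pSetup q K P := by
  apply Finset.sum_pos' (fun i _ => rho_nonneg K P i)
  refine ⟨K, Finset.mem_Icc.2 ⟨hqK, le_rfl⟩, ?_⟩
  unfold rho
  simp only [Nat.choose_self, Nat.sub_self, Nat.choose_zero_right, Nat.cast_one, one_mul]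
  have : 0 < (P.choose K : ℝ) := by exact_mod_cast Nat.choose_pos hKP
  positivity

lemma rho_div_le_one {q K P u : ℕ} (hqK : q ≤ K) (hKP : K ≤ P) (hu : u ∈ Finset.Icc q K) :
    rho K P u / pSetup q K P ≤ 1 := by
  rw [div_le_one (pSetup_pos hqK hKP)]
  exact Finset.single_le_sum (fun i _ => rho_nonneg K P i) hu

lemma choose_ratio_le {τ P u K : ℕ} (huK : u ≤ K) (h2KP : 2 * K ≤ P) (hK : 1 ≤ K) :
    (τ.choose u : ℝ) / (P.choose u : ℝ) ≤ (2 * τ / P) ^ u := by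
  have hPpos : 0 < P := lt_of_lt_of_le (by omega) h2KP
  have huP : u ≤ P := by omega
  have hPc : 0 < (P.choose u : ℝ) := by exact_mod_cast Nat.choose_pos huP
  have hP : (0:ℝ) < P := by exact_mod_cast hPpos
  rw [div_pow, div_le_div_iff₀ hPc (by positivity)]
  have key : τ.choose u * P ^ u ≤ (2 * τ) ^ u * P.choose u := by
    have h1 : P ^ u ≤ 2 ^ u * (P + 1 - u) ^ u := by
      rw [← Nat.mul_pow]; exact Nat.pow_le_pow_left (by omega) u
    have h2 : (P + 1 - u) ^ u ≤ P.descFactorial u := Nat.pow_sub_le_descFactorial P u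
    have h3 : τ.descFactorial u ≤ τ ^ u := Nat.descFactorial_le_pow τ u
    calc τ.choose u * P ^ u ≤ τ.choose u * (2 ^ u * (P + 1 - u) ^ u) :=
          Nat.mul_le_mul_left _ h1
      _ ≤ τ.choose u * (2 ^ u * P.descFactorial u) :=
          Nat.mul_le_mul_left _ (Nat.mul_le_mul_left _ h2)
      _ = 2 ^ u * (τ.choose u * (u.factorial * P.choose u)) := by
          rw [Nat.descFactorial_eq_factorial_mul_choose]; ring
      _ = 2 ^ u * (τ.descFactorial u * P.choose u) := by
          rw [Nat.descFactorial_eq_factorial_mul_choose]; ring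
      _ ≤ 2 ^ u * (τ ^ u * P.choose u) :=
          Nat.mul_le_mul_left _ (Nat.mul_le_mul_right _ h3)
      _ = (2 * τ) ^ u * P.choose u := by rw [Nat.mul_pow]; ring
  exact_mod_cast key

/-- Unassailability of the `q`-composite scheme: if `P_n/K_n = Ω(n)` then an
adversary capturing `m_n = o(n)` sensors, thereby compromising at most
`m_n K_n` keys, compromises only an `o(1)` fraction of links. -/
theorem qcomposite_unassailable
    (q : ℕ) (hq : 1 ≤ q)
    (K P m : ℕ → ℕ)
    (hqK : ∀ n, q ≤ K n) (h2KP : ∀ n, 2 * K n ≤ P n) (hmpos : ∀ n, 0 < m n)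
    (hOmega : ∃ C : ℝ, 0 < C ∧ ∀ᶠ n : ℕ in atTop, C * n ≤ (P n : ℝ) / (K n : ℝ))
    (hmo : Tendsto (fun n => (m n : ℝ) / (n : ℝ)) atTop (nhds 0)) :
    Tendsto (fun n => pCompromised q (K n) (P n) (m n * K n)) atTop (nhds 0) := by
  obtain ⟨C, hC, hCev⟩ := hOmega
  -- the bounding sequence
  have hg : Tendsto (fun n => (4 / C) * ((m n : ℝ) / n)) atTop (nhds 0) := by
    simpa using hmo.const_mul (4 / C)
  apply squeeze_zero'
  · filter_upwards with n
    apply Finset.sum_nonneg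
    intro u hu
    have h1 : (0:ℝ) ≤ ((m n * K n).choose u : ℝ) / (P n).choose u := by positivity
    have h2 : (0:ℝ) ≤ rho (K n) (P n) u / pSetup q (K n) (P n) := by
      have := pSetup_pos (hqK n) (le_trans (by omega) (h2KP n))
      have := rho_nonneg (K n) (P n) u
      positivity
    exact mul_nonneg h1 h2
  · have hsmall : ∀ᶠ n : ℕ in atTop, (m n : ℝ) / n < C / 4 :=
      hmo.eventually (eventually_lt_nhds (by positivity))
    filter_upwards [hCev, hsmall, eventually_gt_atTop 0] with n hCn hsn hn1
    set Kn := K n with hKn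
    set Pn := P n with hPn
    have hK1 : 1 ≤ Kn := le_trans hq (hqK n)
    have hKP : Kn ≤ Pn := le_trans (by omega) (h2KP n)
    have hPpos : 0 < Pn := by omega
    have hKr : (0:ℝ) < Kn := by exact_mod_cast hK1
    have hPr : (0:ℝ) < Pn := by exact_mod_cast hPpos
    have hnr : (0:ℝ) < n := by exact_mod_cast hn1
    set x : ℝ := 2 * (m n * Kn : ℕ) / Pn with hx
    have hx0 : 0 ≤ x := by positivity
    -- x ≤ 2 * m / (C * n)
    have hxle : x ≤ 2 * (m n : ℝ) / (C * n) := by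
      rw [hx, div_le_div_iff₀ hPr (by positivity)]
      push_cast
      have h1 : C * n * (Kn : ℝ) ≤ Pn := by
        rw [le_div_iff₀ hKr] at hCn; exact hCn
      calc 2 * ((m n : ℝ) * Kn) * (C * n) = 2 * (m n) * (C * n * Kn) := by ring
        _ ≤ 2 * (m n) * Pn := by
            apply mul_le_mul_of_nonneg_left h1 (by positivity)
        _ = 2 * (m n) * Pn := rfl
    have hx12 : x ≤ 1 / 2 := by
      calc x ≤ 2 * (m n : ℝ) / (C * n) := hxle
        _ ≤ 2 * (C / 4 * n) / (C * n) := by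
            apply div_le_div_of_nonneg_right ?_ (by positivity) |>.trans_eq rfl
            have : (m n : ℝ) ≤ C / 4 * n := by
              rw [div_lt_iff₀ hnr] at hsn; linarith
            linarith
        _ = 1 / 2 := by field_simp; ring
    -- step 1: drop the rho/pSetup factor
    have step1 : pCompromised q Kn Pn (m n * Kn) ≤
        ∑ u ∈ Finset.Icc q Kn, x ^ u := by
      apply Finset.sum_le_sum
      intro u hu
      have hmem := Finset.mem_Icc.1 hu
      have hr1 : ((m n * Kn).choose u : ℝ) / ((Pn).choose u : ℝ) ≤ x ^ u := by
        rw [hx]; exact choose_ratio_le hmem.2 (h2KP n) hK1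
      have hr0 : (0:ℝ) ≤ ((m n * Kn).choose u : ℝ) / ((Pn).choose u : ℝ) := by positivity
      calc ((m n * Kn).choose u : ℝ) / ((Pn).choose u : ℝ) * (rho Kn Pn u / pSetup q Kn Pn)
          ≤ ((m n * Kn).choose u : ℝ) / ((Pn).choose u : ℝ) * 1 :=
            mul_le_mul_of_nonneg_left (rho_div_le_one (hqK n) hKP hu) hr0
        _ = ((m n * Kn).choose u : ℝ) / ((Pn).choose u : ℝ) := mul_one _
        _ ≤ x ^ u := hr1
    -- step 2: geometric bound
    have step2 : ∑ u ∈ Finset.Icc q Kn, x ^ u ≤ 2 * x := by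
      have hsub : Finset.Icc q Kn ⊆ Finset.Icc 1 Kn := Finset.Icc_subset_Icc_left hq
      have h21 : ∑ u ∈ Finset.Icc q Kn, x ^ u ≤ ∑ u ∈ Finset.Icc 1 Kn, x ^ u :=
        Finset.sum_le_sum_of_subset_of_nonneg hsub (fun i _ _ => by positivity)
      have h22 : ∑ u ∈ Finset.Icc 1 Kn, x ^ u = x * ∑ j ∈ Finset.range Kn, x ^ j := by
        rw [← Finset.Ico_add_one_right_eq_Icc, Finset.sum_Ico_eq_sum_range]
        simp only [Nat.add_sub_cancel]
        rw [Finset.mul_sum]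
        exact Finset.sum_congr rfl fun j _ => by rw [pow_add, pow_one]
      have h23 : ∑ j ∈ Finset.range Kn, x ^ j ≤ 2 := by
        calc ∑ j ∈ Finset.range Kn, x ^ j ≤ ∑ j ∈ Finset.range Kn, (1/2:ℝ) ^ j :=
              Finset.sum_le_sum fun j _ => pow_le_pow_left₀ hx0 hx12 j
          _ ≤ 2 := sum_geometric_two_le Kn
      calc ∑ u ∈ Finset.Icc q Kn, x ^ u ≤ x * ∑ j ∈ Finset.range Kn, x ^ j := by
            rw [← h22]; exact h21
        _ ≤ x * 2 := mul_le_mul_of_nonneg_left h23 hx0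
        _ = 2 * x := by ring
    -- combine
    calc pCompromised q Kn Pn (m n * Kn) ≤ 2 * x := step1.trans step2
      _ ≤ 2 * (2 * (m n : ℝ) / (C * n)) := by linarith
      _ = (4 / C) * ((m n : ℝ) / n) := by field_simp; ring
  · exact hg
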